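/- arXiv:1912.03646 — 2 statements merged into one kernel-verified Lean document; each statement's English description precedes it below -/
import Mathlib

section
/- Let M ≥ 2, K ≥ 1 and d ≥ 1 be natural numbers, let U : 𝒦 → Matrix 𝒮 𝒮 ℂ be any family of unitary matrices, and let Π be the associated privacy test. Then every biseparable density matrix σ on 𝒦 × 𝒮 satisfies Re Tr[Π · σ] ≤ 1/K. (Consequently, a biseparable state can never pass any γ-privacy test with probability greater than 1/K.) -/
open Matrix Kronecker
open scoped ComplexOrder

open scoped Classical in
noncomputable def matSqrt {n : Type*} [Fintype n] [DecidableEq n] (A : Matrix n n ℂ) :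
    Matrix n n ℂ :=
  if h : A.PosSemidef then
    (h.1.eigenvectorUnitary : Matrix n n ℂ) * diagonal ((↑) ∘ (√·) ∘ h.1.eigenvalues) *
      (star h.1.eigenvectorUnitary : Matrix n n ℂ)
  else 0

noncomputable def rootFidelity {n : Type*} [Fintype n] [DecidableEq n]
    (ρ σ : Matrix n n ℂ) : ℝ :=
  (matSqrt (matSqrt σ * ρ * matSqrt σ)).trace.re

noncomputable def fidelity {n : Type*} [Fintype n] [DecidableEq n]
    (ρ σ : Matrix n n ℂ) : ℝ :=
  (rootFidelity ρ σ) ^ 2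

noncomputable def traceNorm {n : Type*} [Fintype n] [DecidableEq n] (A : Matrix n n ℂ) : ℝ :=
  (matSqrt (Aᴴ * A)).trace.re

/-- The set of attainable type-II error values in hypothesis testing. -/
def testValues {n : Type*} [Fintype n] [DecidableEq n] (ρ σ : Matrix n n ℂ) (ε : ℝ) :
    Set ℝ :=
  { x | ∃ Λ : Matrix n n ℂ, Λ.PosSemidef ∧ (1 - Λ).PosSemidef ∧
      1 - ε ≤ (Λ * ρ).trace.re ∧ x = (Λ * σ).trace.re }

/-- ε-hypothesis-testing relative entropy. -/
noncomputable def Dh {n : Type*} [Fintype n] [DecidableEq n]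
    (ρ σ : Matrix n n ℂ) (ε : ℝ) : ℝ :=
  - Real.logb 2 (sInf (testValues ρ σ ε))

/-- GHZ unit vector. -/
noncomputable def ghz (M K : ℕ) : (Fin M → Fin K) → ℂ :=
  fun f => if ∃ c, ∀ m, f m = c then ((Real.sqrt K : ℂ))⁻¹ else 0

/-- GHZ rank-one projection. -/
noncomputable def ghzProj (M K : ℕ) : Matrix (Fin M → Fin K) (Fin M → Fin K) ℂ :=
  Matrix.vecMulVec (ghz M K) (star ∘ ghz M K)

/-- The twisting unitary. -/
def twist (M K d : ℕ)
    (U : (Fin M → Fin K) → Matrix (Fin M → Fin d) (Fin M → Fin d) ℂ) :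
    Matrix ((Fin M → Fin K) × (Fin M → Fin d)) ((Fin M → Fin K) × (Fin M → Fin d)) ℂ :=
  Matrix.of fun p q => if p.1 = q.1 then U p.1 p.2 q.2 else 0

/-- The privacy test `Π = W (Φ ⊗ 1) Wᴴ`. -/
noncomputable def privacyTest (M K d : ℕ)
    (U : (Fin M → Fin K) → Matrix (Fin M → Fin d) (Fin M → Fin d) ℂ) :
    Matrix ((Fin M → Fin K) × (Fin M → Fin d)) ((Fin M → Fin K) × (Fin M → Fin d)) ℂ :=
  twist M K d U * (ghzProj M K ⊗ₖ (1 : Matrix (Fin M → Fin d) (Fin M → Fin d) ℂ)) *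
    (twist M K d U)ᴴ

/-- The private state `γ = W (Φ ⊗ ω) Wᴴ`. -/
noncomputable def privateState (M K d : ℕ)
    (U : (Fin M → Fin K) → Matrix (Fin M → Fin d) (Fin M → Fin d) ℂ)
    (ω : Matrix (Fin M → Fin d) (Fin M → Fin d) ℂ) :
    Matrix ((Fin M → Fin K) × (Fin M → Fin d)) ((Fin M → Fin K) × (Fin M → Fin d)) ℂ :=
  twist M K d U * (ghzProj M K ⊗ₖ ω) * (twist M K d U)ᴴ

/-- A vector on `𝒦 × 𝒮` is product across the bipartition `J | Jᶜ` of the parties. -/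
def IsProductAcross {M K d : ℕ} (J : Set (Fin M))
    (v : (Fin M → Fin K) × (Fin M → Fin d) → ℂ) : Prop :=
  ∃ (v₁ : ((↥J) → Fin K) × ((↥J) → Fin d) → ℂ)
    (v₂ : ((↥(Jᶜ)) → Fin K) × ((↥(Jᶜ)) → Fin d) → ℂ),
    ∀ (f : Fin M → Fin K) (x : Fin M → Fin d),
      v (f, x) = v₁ (fun m => f m.1, fun m => x m.1) * v₂ (fun m => f m.1, fun m => x m.1)

/-- Biseparability: a finite convex combination of pure states, each product across
some nontrivial bipartition of the parties. -/
def Biseparable {M K d : ℕ}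
    (σ : Matrix ((Fin M → Fin K) × (Fin M → Fin d))
      ((Fin M → Fin K) × (Fin M → Fin d)) ℂ) : Prop :=
  ∃ (N : ℕ) (p : Fin N → ℝ) (w : Fin N → ((Fin M → Fin K) × (Fin M → Fin d)) → ℂ)
    (J : Fin N → Set (Fin M)),
    (∀ t, 0 ≤ p t) ∧ (∑ t, p t = 1) ∧
    (∀ t, ∑ i, ‖w t i‖ ^ 2 = 1) ∧
    (∀ t, J t ≠ ∅ ∧ J t ≠ Set.univ ∧ IsProductAcross (J t) (w t)) ∧
    σ = ∑ t, (p t : ℂ) • Matrix.vecMulVec (w t) (star ∘ w t)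

/-- Partial trace over the second tensor factor. -/
noncomputable def partialTrace₂ {A B : Type*} [Fintype B] (τ : Matrix (A × B) (A × B) ℂ) :
    Matrix A A ℂ :=
  Matrix.of fun a a' => ∑ b, τ (a, b) (a', b)

/-- Matrix logarithm of a Hermitian matrix via the spectral functional calculus. -/
noncomputable def matLog {n : Type*} [Fintype n] [DecidableEq n] (A : Matrix n n ℂ) :
    Matrix n n ℂ :=
  if hA : A.IsHermitian then
    (hA.eigenvectorUnitary : Matrix n n ℂ) *
      Matrix.diagonal (fun i => (Real.log (hA.eigenvalues i) : ℂ)) *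
      (star hA.eigenvectorUnitary : Matrix n n ℂ)
  else 0

lemma privacyTest_apply (M K d : ℕ)
    (U : (Fin M → Fin K) → Matrix (Fin M → Fin d) (Fin M → Fin d) ℂ)
    (f g : Fin M → Fin K) (x y : Fin M → Fin d) :
    privacyTest M K d U (f, x) (g, y)
      = ∑ z : Fin M → Fin d,
          U f x z * (ghz M K f * (starRingEnd ℂ) (ghz M K g)) * (starRingEnd ℂ) (U g y z) := by
  classical
  simp only [privacyTest, Matrix.mul_apply, Matrix.conjTranspose_apply, twist, Matrix.of_apply,
    ghzProj, Matrix.kroneckerMap_apply, Matrix.vecMulVec_apply, Function.comp_apply,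
    Matrix.one_apply, Fintype.sum_prod_type]
  simp only [ite_mul, zero_mul, mul_ite, mul_zero, apply_ite (starRingEnd ℂ), map_zero,
    Finset.sum_ite_eq, Finset.sum_ite_eq', Finset.mem_univ, if_true]
  rw [Finset.sum_comm]
  simp only [apply_ite (star : ℂ → ℂ), star_zero, mul_ite, mul_zero,
    Finset.sum_ite_eq, Finset.sum_ite_eq', Finset.mem_univ, if_true, mul_one]
  rfl

lemma trace_formula (M K d : ℕ)
    (U : (Fin M → Fin K) → Matrix (Fin M → Fin d) (Fin M → Fin d) ℂ)
    (w : (Fin M → Fin K) × (Fin M → Fin d) → ℂ) :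
    (privacyTest M K d U * Matrix.vecMulVec w (star ∘ w)).trace
      = ∑ z : Fin M → Fin d,
          (starRingEnd ℂ) (∑ p : (Fin M → Fin K) × (Fin M → Fin d),
              (starRingEnd ℂ) (ghz M K p.1 * U p.1 p.2 z) * w p) *
            (∑ p : (Fin M → Fin K) × (Fin M → Fin d),
              (starRingEnd ℂ) (ghz M K p.1 * U p.1 p.2 z) * w p) := by
  classical
  have hPT : ∀ p q : (Fin M → Fin K) × (Fin M → Fin d),
      privacyTest M K d U p q = ∑ z : Fin M → Fin d,
        U p.1 p.2 z * (ghz M K p.1 * (starRingEnd ℂ) (ghz M K q.1)) *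
          (starRingEnd ℂ) (U q.1 q.2 z) := by
    rintro ⟨f, x⟩ ⟨g, y⟩; exact privacyTest_apply M K d U f g x y
  rw [Matrix.trace]
  simp only [Matrix.diag_apply, Matrix.mul_apply, Matrix.vecMulVec_apply, Function.comp_apply,
    hPT, Finset.sum_mul]
  have hswap : ∀ p : (Fin M → Fin K) × (Fin M → Fin d),
      (∑ q : (Fin M → Fin K) × (Fin M → Fin d), ∑ z : Fin M → Fin d,
        U p.1 p.2 z * (ghz M K p.1 * (starRingEnd ℂ) (ghz M K q.1)) *
          (starRingEnd ℂ) (U q.1 q.2 z) * (w q * star (w p)))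
      = ∑ z : Fin M → Fin d, ∑ q : (Fin M → Fin K) × (Fin M → Fin d),
        U p.1 p.2 z * (ghz M K p.1 * (starRingEnd ℂ) (ghz M K q.1)) *
          (starRingEnd ℂ) (U q.1 q.2 z) * (w q * star (w p)) :=
    fun p => Finset.sum_comm
  simp only [hswap]
  rw [Finset.sum_comm]
  refine Finset.sum_congr rfl fun z _ => ?_
  rw [map_sum, Finset.sum_mul_sum]
  refine Finset.sum_congr rfl fun p _ => Finset.sum_congr rfl fun q _ => ?_
  simp only [_root_.map_mul, Complex.conj_conj, Complex.star_def]
  ring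

lemma sum_ghz_weighted (M K : ℕ) (hM : 0 < M) (F : (Fin M → Fin K) → ℂ) :
    ∑ f : Fin M → Fin K, (starRingEnd ℂ) (ghz M K f) * F f
      = ((Real.sqrt K : ℂ))⁻¹ * ∑ c : Fin K, F (fun _ => c) := by
  classical
  rw [← Finset.sum_filter_add_sum_filter_not Finset.univ (fun f => ∃ c, ∀ m, f m = c)]
  have h2 : ∑ f ∈ Finset.univ.filter (fun f : Fin M → Fin K => ¬ ∃ c, ∀ m, f m = c),
      (starRingEnd ℂ) (ghz M K f) * F f = 0 := by
    refine Finset.sum_eq_zero fun f hf => ?_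
    have := (Finset.mem_filter.1 hf).2
    simp [ghz, this]
  rw [h2, add_zero]
  have himg : Finset.univ.filter (fun f : Fin M → Fin K => ∃ c, ∀ m, f m = c)
      = Finset.univ.image (fun c : Fin K => (fun _ => c : Fin M → Fin K)) := by
    ext f
    simp only [Finset.mem_filter, Finset.mem_univ, true_and, Finset.mem_image]
    constructor
    · rintro ⟨c, hc⟩; exact ⟨c, funext fun m => (hc m).symm⟩
    · rintro ⟨c, hc⟩; exact ⟨c, fun m => (congrFun hc m).symm⟩
  have hinj : ∀ a ∈ Finset.univ, ∀ b ∈ Finset.univ,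
      ((fun c : Fin K => (fun _ => c : Fin M → Fin K)) a
        = (fun c : Fin K => (fun _ => c : Fin M → Fin K)) b) → a = b := by
    intro a _ b _ h
    exact congrFun h ⟨0, hM⟩
  rw [himg, Finset.sum_image hinj, Finset.mul_sum]
  refine Finset.sum_congr rfl fun c _ => ?_
  have : ghz M K (fun _ => c) = ((Real.sqrt K : ℂ))⁻¹ := by
    unfold ghz; rw [if_pos ⟨c, fun _ => rfl⟩]
  rw [this, map_inv₀, Complex.conj_ofReal]

lemma unitary_normSq_sum {n : Type*} [Fintype n] [DecidableEq n]
    {A : Matrix n n ℂ} (hA : A ∈ Matrix.unitaryGroup n ℂ) (v : n → ℂ) :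
    ∑ z, Complex.normSq ((Aᴴ *ᵥ v) z) = ∑ x, Complex.normSq (v x) := by
  have hAA : A * Aᴴ = 1 := by
    have := (Matrix.mem_unitaryGroup_iff).1 hA
    rwa [Matrix.star_eq_conjTranspose] at this
  have key : star (Aᴴ *ᵥ v) ⬝ᵥ (Aᴴ *ᵥ v) = star v ⬝ᵥ v := by
    rw [Matrix.star_mulVec, Matrix.conjTranspose_conjTranspose,
      Matrix.dotProduct_mulVec, Matrix.vecMul_vecMul, hAA, Matrix.vecMul_one]
  have expand : ∀ u : n → ℂ, star u ⬝ᵥ u = ((∑ z, Complex.normSq (u z) : ℝ) : ℂ) := by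
    intro u
    rw [dotProduct]
    push_cast
    refine Finset.sum_congr rfl fun z _ => ?_
    rw [Pi.star_apply, Complex.normSq_eq_conj_mul_self]
    rfl
  have := key
  rw [expand, expand] at this
  exact_mod_cast this

lemma sum_restrict_split {M : ℕ} (J : Set (Fin M)) {γ : Type*} [Fintype γ]
    [DecidablePred (· ∈ J)] [Fintype (↥J)] [Fintype (↥(Jᶜ))]
    (F : ((↥J) → γ) → ℝ) (G : ((↥(Jᶜ)) → γ) → ℝ) :
    ∑ x : Fin M → γ, F (fun m => x m.1) * G (fun m => x m.1)
      = (∑ a : (↥J) → γ, F a) * (∑ b : (↥(Jᶜ)) → γ, G b) := by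
  have hbij : Function.Bijective
      (fun x : Fin M → γ => ((fun m => x m.1, fun m => x m.1) :
        ((↥J) → γ) × ((↥(Jᶜ)) → γ))) := by
    constructor
    · intro x y h
      funext i
      by_cases hi : i ∈ J
      · exact congrFun (congrArg Prod.fst h) ⟨i, hi⟩
      · exact congrFun (congrArg Prod.snd h) ⟨i, hi⟩
    · rintro ⟨a, b⟩
      refine ⟨fun i => if h : i ∈ J then a ⟨i, h⟩ else b ⟨i, h⟩, ?_⟩
      refine Prod.ext ?_ ?_ <;> funext m
      · exact dif_pos m.2
      · exact dif_neg m.2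
  refine (Fintype.sum_bijective _ hbij _ (fun q => F q.1 * G q.2) fun x => rfl).trans ?_
  rw [Fintype.sum_prod_type, ← Finset.sum_mul_sum]

lemma sum_const_le {M K : ℕ} (J : Set (Fin M)) [Fintype (↥J)] (hJ : J.Nonempty)
    (g : ((↥J) → Fin K) → ℝ) (hg : ∀ a, 0 ≤ g a) :
    ∑ c : Fin K, g (fun _ => c) ≤ ∑ a : (↥J) → Fin K, g a := by
  classical
  have hinj : Function.Injective (fun c : Fin K => (fun _ => c : (↥J) → Fin K)) := by
    intro a b h
    obtain ⟨j, hj⟩ := hJ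
    exact congrFun h ⟨j, hj⟩
  calc ∑ c : Fin K, g (fun _ => c)
      = ∑ a ∈ Finset.univ.image (fun c : Fin K => (fun _ => c : (↥J) → Fin K)), g a := by
        rw [Finset.sum_image (fun a _ b _ h => hinj h)]
    _ ≤ ∑ a : (↥J) → Fin K, g a :=
        Finset.sum_le_sum_of_subset_of_nonneg (Finset.subset_univ _) (fun a _ _ => hg a)

open scoped Classical in
lemma pure_bound (M K d : ℕ) (hM : 2 ≤ M) (hK : 1 ≤ K)
    (U : (Fin M → Fin K) → Matrix (Fin M → Fin d) (Fin M → Fin d) ℂ)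
    (hU : ∀ f, U f ∈ Matrix.unitaryGroup (Fin M → Fin d) ℂ)
    (w : (Fin M → Fin K) × (Fin M → Fin d) → ℂ)
    (hw : ∑ i, ‖w i‖ ^ 2 = 1)
    (J : Set (Fin M)) (hJ1 : J ≠ ∅) (hJ2 : J ≠ Set.univ)
    (hprod : IsProductAcross J w) :
    (privacyTest M K d U * Matrix.vecMulVec w (star ∘ w)).trace.re ≤ 1 / (K : ℝ) := by
  classical
  obtain ⟨v₁, v₂, hv⟩ := hprod
  have hw' : ∑ i : (Fin M → Fin K) × (Fin M → Fin d), Complex.normSq (w i) = 1 := by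
    rw [← hw]
    exact Finset.sum_congr rfl fun i _ => by rw [Complex.sq_norm]
  set v : Fin K → (Fin M → Fin d) → ℂ := fun c x => w (fun _ => c, x) with hvdef
  set u : Fin K → EuclideanSpace ℂ (Fin M → Fin d) :=
    fun c => WithLp.toLp 2 ((U (fun _ => c))ᴴ *ᵥ (v c)) with hudef
  -- Step A: rewrite the trace
  have htrace := trace_formula M K d U w
  have hTz : ∀ z : Fin M → Fin d,
      (∑ p : (Fin M → Fin K) × (Fin M → Fin d),
        (starRingEnd ℂ) (ghz M K p.1 * U p.1 p.2 z) * w p)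
      = ((Real.sqrt K : ℂ))⁻¹ * ∑ c : Fin K, u c z := by
    intro z
    rw [Fintype.sum_prod_type]
    have hsplit : ∀ f : Fin M → Fin K,
        (∑ x, (starRingEnd ℂ) (ghz M K f * U f x z) * w (f, x))
        = (starRingEnd ℂ) (ghz M K f) * ∑ x, (starRingEnd ℂ) (U f x z) * w (f, x) := by
      intro f
      rw [Finset.mul_sum]
      exact Finset.sum_congr rfl fun x _ => by rw [_root_.map_mul]; ring
    simp only [hsplit]
    rw [sum_ghz_weighted M K (by omega) (fun f => ∑ x, (starRingEnd ℂ) (U f x z) * w (f, x))]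
    congr 1
  -- Step B: real part
  have hnormSqinv : Complex.normSq ((Real.sqrt K : ℂ))⁻¹ = (K : ℝ)⁻¹ := by
    rw [map_inv₀ Complex.normSq, Complex.normSq_ofReal,
      Real.mul_self_sqrt (Nat.cast_nonneg K)]
  have hre : (privacyTest M K d U * Matrix.vecMulVec w (star ∘ w)).trace.re
      = (K : ℝ)⁻¹ * ∑ z, Complex.normSq (∑ c, u c z) := by
    rw [htrace, Complex.re_sum, Finset.mul_sum]
    refine Finset.sum_congr rfl fun z _ => ?_
    rw [hTz z, ← Complex.normSq_eq_conj_mul_self, Complex.ofReal_re, Complex.normSq_mul,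
      hnormSqinv]
  -- Step C: Euclidean norms
  have hnorm : ∀ ψ : EuclideanSpace ℂ (Fin M → Fin d), ‖ψ‖ ^ 2 = ∑ z, Complex.normSq (ψ z) := by
    intro ψ
    rw [EuclideanSpace.norm_eq, Real.sq_sqrt (Finset.sum_nonneg fun _ _ => sq_nonneg _)]
    exact Finset.sum_congr rfl fun z _ => by rw [Complex.sq_norm]
  have hsum_apply : ∀ z, (∑ c, u c) z = ∑ c, u c z := by
    intro z
    rw [WithLp.ofLp_sum, Finset.sum_apply]
  have hC : ∑ z, Complex.normSq (∑ c, u c z) = ‖∑ c, u c‖ ^ 2 := by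
    rw [hnorm]
    exact Finset.sum_congr rfl fun z _ => by rw [hsum_apply]
  -- Step D: per-c norms via unitarity and product structure
  set α : Fin K → ℝ :=
    fun c => ∑ a : (↥J) → Fin d, Complex.normSq (v₁ (fun _ => c, a)) with hαdef
  set β : Fin K → ℝ :=
    fun c => ∑ b : (↥(Jᶜ)) → Fin d, Complex.normSq (v₂ (fun _ => c, b)) with hβdef
  have hα0 : ∀ c, 0 ≤ α c := fun c => Finset.sum_nonneg fun _ _ => Complex.normSq_nonneg _
  have hβ0 : ∀ c, 0 ≤ β c := fun c => Finset.sum_nonneg fun _ _ => Complex.normSq_nonneg _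
  have h8 : ∀ c, ‖u c‖ ^ 2 = α c * β c := by
    intro c
    rw [hnorm]
    have hUc := unitary_normSq_sum (hU (fun _ => c)) (v c)
    have : ∑ z, Complex.normSq (u c z) = ∑ x, Complex.normSq (v c x) := hUc
    rw [this]
    have hsplit := sum_restrict_split J
      (fun a => Complex.normSq (v₁ (fun _ => c, a)))
      (fun b => Complex.normSq (v₂ (fun _ => c, b)))
    rw [hαdef, hβdef, ← hsplit]
    refine Finset.sum_congr rfl fun x _ => ?_
    show Complex.normSq (w (fun _ => c, x)) = _
    rw [hv (fun _ => c) x, Complex.normSq_mul]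
  -- Step E: total norms multiply to 1
  set N₁ : ℝ := ∑ fJ : (↥J) → Fin K, ∑ a : (↥J) → Fin d,
      Complex.normSq (v₁ (fJ, a)) with hN₁def
  set N₂ : ℝ := ∑ fc : (↥(Jᶜ)) → Fin K, ∑ b : (↥(Jᶜ)) → Fin d,
      Complex.normSq (v₂ (fc, b)) with hN₂def
  have hN10 : 0 ≤ N₁ :=
    Finset.sum_nonneg fun _ _ => Finset.sum_nonneg fun _ _ => Complex.normSq_nonneg _
  have hN20 : 0 ≤ N₂ :=
    Finset.sum_nonneg fun _ _ => Finset.sum_nonneg fun _ _ => Complex.normSq_nonneg _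
  have hNprod : N₁ * N₂ = 1 := by
    rw [← hw', Fintype.sum_prod_type]
    have step1 : ∀ f : Fin M → Fin K, ∑ x : Fin M → Fin d, Complex.normSq (w (f, x))
        = (∑ a : (↥J) → Fin d, Complex.normSq (v₁ (fun m => f m.1, a)))
          * (∑ b : (↥(Jᶜ)) → Fin d, Complex.normSq (v₂ (fun m => f m.1, b))) := by
      intro f
      rw [← sum_restrict_split J (fun a => Complex.normSq (v₁ (fun m => f m.1, a)))
          (fun b => Complex.normSq (v₂ (fun m => f m.1, b)))]
      exact Finset.sum_congr rfl fun x _ => by rw [hv f x, Complex.normSq_mul]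
    rw [hN₁def, hN₂def,
      ← sum_restrict_split J (fun fJ => ∑ a : (↥J) → Fin d, Complex.normSq (v₁ (fJ, a)))
        (fun fc => ∑ b : (↥(Jᶜ)) → Fin d, Complex.normSq (v₂ (fc, b)))]
    exact Finset.sum_congr rfl fun f _ => (step1 f).symm
  -- Step F: marginal sums bounded
  have hαsum : ∑ c, α c ≤ N₁ := by
    obtain ⟨j, hj⟩ : J.Nonempty := Set.nonempty_iff_ne_empty.2 hJ1
    rw [hαdef, hN₁def]
    exact sum_const_le J ⟨j, hj⟩
      (fun fJ => ∑ a : (↥J) → Fin d, Complex.normSq (v₁ (fJ, a)))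
      (fun fJ => Finset.sum_nonneg fun _ _ => Complex.normSq_nonneg _)
  have hβsum : ∑ c, β c ≤ N₂ := by
    have hcne : (Jᶜ : Set (Fin M)).Nonempty := Set.nonempty_compl.2 hJ2
    rw [hβdef, hN₂def]
    exact sum_const_le (Jᶜ) hcne
      (fun fc => ∑ b : (↥(Jᶜ)) → Fin d, Complex.normSq (v₂ (fc, b)))
      (fun fc => Finset.sum_nonneg fun _ _ => Complex.normSq_nonneg _)
  -- Step G: Cauchy-Schwarz
  have hCS : (∑ c, ‖u c‖) ^ 2 ≤ (∑ c, α c) * (∑ c, β c) :=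
    Finset.sum_sq_le_sum_mul_sum_of_sq_eq_mul Finset.univ
      (fun c _ => hα0 c) (fun c _ => hβ0 c) (fun c _ => h8 c)
  -- Final chain
  have hKinv0 : (0:ℝ) ≤ (K:ℝ)⁻¹ := by positivity
  calc (privacyTest M K d U * Matrix.vecMulVec w (star ∘ w)).trace.re
      = (K : ℝ)⁻¹ * ∑ z, Complex.normSq (∑ c, u c z) := hre
    _ = (K : ℝ)⁻¹ * ‖∑ c, u c‖ ^ 2 := by rw [hC]
    _ ≤ (K : ℝ)⁻¹ * (∑ c, ‖u c‖) ^ 2 := by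
        have := pow_le_pow_left₀ (norm_nonneg _) (norm_sum_le Finset.univ u) 2
        exact mul_le_mul_of_nonneg_left this hKinv0
    _ ≤ (K : ℝ)⁻¹ * ((∑ c, α c) * (∑ c, β c)) := mul_le_mul_of_nonneg_left hCS hKinv0
    _ ≤ (K : ℝ)⁻¹ * (N₁ * N₂) := by
        refine mul_le_mul_of_nonneg_left ?_ hKinv0
        exact mul_le_mul hαsum hβsum (Finset.sum_nonneg fun c _ => hβ0 c) hN10
    _ = 1 / (K : ℝ) := by rw [hNprod, mul_one, one_div]

/-- Every biseparable density matrix passes the privacy test with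
probability at most `1/K`. -/
theorem stmt_0 (M K d : ℕ) (hM : 2 ≤ M) (hK : 1 ≤ K) (hd : 1 ≤ d)
    (U : (Fin M → Fin K) → Matrix (Fin M → Fin d) (Fin M → Fin d) ℂ)
    (hU : ∀ f, U f ∈ Matrix.unitaryGroup (Fin M → Fin d) ℂ)
    (σ : Matrix ((Fin M → Fin K) × (Fin M → Fin d))
      ((Fin M → Fin K) × (Fin M → Fin d)) ℂ)
    (hσ : σ.PosSemidef) (hσtr : σ.trace = 1)
    (hbisep : Biseparable σ) :
    (privacyTest M K d U * σ).trace.re ≤ 1 / (K : ℝ) := by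
  obtain ⟨N, p, wv, Jf, hp0, hp1, hwnorm, hJ, hσeq⟩ := hbisep
  have key : ∀ t, (privacyTest M K d U * Matrix.vecMulVec (wv t) (star ∘ wv t)).trace.re
      ≤ 1 / (K : ℝ) := fun t =>
    pure_bound M K d hM hK U hU (wv t) (hwnorm t) (Jf t) (hJ t).1 (hJ t).2.1 (hJ t).2.2
  rw [hσeq, Finset.mul_sum]
  simp only [mul_smul_comm]
  rw [Matrix.trace_sum, Complex.re_sum]
  have hterm : ∀ t, ((p t : ℂ) • (privacyTest M K d U *
      Matrix.vecMulVec (wv t) (star ∘ wv t))).trace.re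
      = p t * (privacyTest M K d U * Matrix.vecMulVec (wv t) (star ∘ wv t)).trace.re := by
    intro t
    rw [Matrix.trace_smul, smul_eq_mul, Complex.re_ofReal_mul]
  calc ∑ t, ((p t : ℂ) • (privacyTest M K d U *
        Matrix.vecMulVec (wv t) (star ∘ wv t))).trace.re
      = ∑ t, p t * (privacyTest M K d U * Matrix.vecMulVec (wv t) (star ∘ wv t)).trace.re :=
        Finset.sum_congr rfl fun t _ => hterm t
    _ ≤ ∑ t, p t * (1 / (K : ℝ)) :=
        Finset.sum_le_sum fun t _ => mul_le_mul_of_nonneg_left (key t) (hp0 t)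
    _ = 1 / (K : ℝ) := by rw [← Finset.sum_mul, hp1, one_mul]
end

section
/- Let G be a connected simple graph on a finite vertex set V with at least two vertices, and let w : Sym2 V → ℝ be an edge-weight function. If T is a spanning tree of G whose total weight Σ_{e ∈ edges(T)} w(e) is minimal among all spanning trees of G, then T is a minimum bottleneck spanning tree: for every spanning tree T' of G, the maximum edge weight of T is at most the maximum edge weight of T', i.e. max_{e ∈ edges(T)} w(e) ≤ max_{e ∈ edges(T')} w(e). -/
/-- A spanning tree of `G`: a subgraph (on the same, full vertex set) that is
connected and acyclic. -/
def IsSpanningTree {V : Type*} (G T : SimpleGraph V) : Prop :=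
  T ≤ G ∧ T.Connected ∧ T.IsAcyclic

open SimpleGraph in
/-- A connected graph on at least two vertices has an edge. -/
lemma aux_edgeSet_nonempty {V : Type*} [Fintype V] (hV : 2 ≤ Fintype.card V)
    (H : SimpleGraph V) (hc : H.Connected) : H.edgeSet.Nonempty := by
  obtain ⟨a, b, hab⟩ := Fintype.exists_pair_of_one_lt_card (α := V) (by omega)
  obtain ⟨p⟩ := hc.preconnected a b
  cases p with
  | nil => exact absurd rfl hab
  | cons h q => exact ⟨_, H.mem_edgeSet.mpr h⟩

open SimpleGraph in
/-- The key exchange lemma: if `s(a,b)` is an edge of a minimum spanning tree `T`,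
then any other spanning tree `T'` has an edge of weight at least `w s(a,b)`. -/
lemma aux_exchange {V : Type*} [Fintype V]
    (G : SimpleGraph V) (w : Sym2 V → ℝ)
    (T : SimpleGraph V) (hT : IsSpanningTree G T)
    (hmin : ∀ T' : SimpleGraph V, IsSpanningTree G T' →
      (∑ᶠ e ∈ T.edgeSet, w e) ≤ ∑ᶠ e ∈ T'.edgeSet, w e)
    (T' : SimpleGraph V) (hT' : IsSpanningTree G T')
    (a b : V) (he : s(a, b) ∈ T.edgeSet) :
    ∃ f ∈ T'.edgeSet, w s(a, b) ≤ w f := by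
  classical
  obtain ⟨hTG, hTc, hTa⟩ := hT
  obtain ⟨hT'G, hT'c, hT'a⟩ := hT'
  set T₀ : SimpleGraph V := T.deleteEdges {s(a, b)} with hT₀
  -- the removed edge was a bridge
  have hbridge : T.IsBridge s(a, b) :=
    isAcyclic_iff_forall_edge_isBridge.mp hTa he
  have hnr : ¬ T₀.Reachable a b := isBridge_iff.mp hbridge
  have hT₀T : T₀ ≤ T := deleteEdges_le _
  -- every vertex reaches `a` or `b` in `T₀`
  have claim1 : ∀ v, T₀.Reachable v a ∨ T₀.Reachable v b := by
    have H : ∀ v u (p : T.Walk v u),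
        (T₀.Reachable u a ∨ T₀.Reachable u b) →
        (T₀.Reachable v a ∨ T₀.Reachable v b) := by
      intro v u p
      induction p with
      | nil => exact id
      | @cons s t _ h q ih =>
        intro hu
        by_cases hec : s(s, t) = s(a, b)
        · rcases Sym2.eq_iff.mp hec with ⟨rfl, rfl⟩ | ⟨rfl, rfl⟩
          · exact Or.inl (Reachable.refl _)
          · exact Or.inr (Reachable.refl _)
        · have hadj : T₀.Adj s t := by
            rw [hT₀, deleteEdges_adj]
            exact ⟨h, by simpa using hec⟩
          rcases ih hu with h1 | h1
          · exact Or.inl (hadj.reachable.trans h1)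
          · exact Or.inr (hadj.reachable.trans h1)
    intro v
    obtain ⟨p⟩ := hTc.preconnected v a
    exact H v a p (Or.inl (Reachable.refl _))
  -- find an edge of `T'` crossing the cut
  have claim2 : ∃ x y, T'.Adj x y ∧ T₀.Reachable a x ∧ ¬ T₀.Reachable a y := by
    have H : ∀ u v (p : T'.Walk u v), T₀.Reachable a u → ¬ T₀.Reachable a v →
        ∃ x y, T'.Adj x y ∧ T₀.Reachable a x ∧ ¬ T₀.Reachable a y := by
      intro u v p
      induction p with
      | nil => exact fun h1 h2 => absurd h1 h2
      | @cons s t _ h q ih =>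
        intro hu hv
        by_cases hc : T₀.Reachable a t
        · exact ih hc hv
        · exact ⟨s, t, h, hu, hc⟩
    obtain ⟨p⟩ := hT'c.preconnected a b
    exact H a b p (Reachable.refl _) hnr
  obtain ⟨x, y, hxy, hx, hy⟩ := claim2
  have hfT' : s(x, y) ∈ T'.edgeSet := hxy
  -- if the crossing edge lies in `T`, it must be the removed edge itself
  by_cases hfT : s(x, y) ∈ T.edgeSet
  · by_cases hfe : s(x, y) = s(a, b)
    · exact ⟨s(x, y), hfT', le_of_eq (by rw [hfe])⟩
    · exfalso
      have hadj : T₀.Adj x y := by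
        rw [hT₀, deleteEdges_adj]
        exact ⟨hfT, by simpa using hfe⟩
      exact hy (hx.trans hadj.reachable)
  -- main case: build the exchanged tree `T₁`
  have hxny : x ≠ y := hxy.ne
  set T₁ : SimpleGraph V := T₀ ⊔ SimpleGraph.fromEdgeSet {s(x, y)} with hT₁
  have hT₀T₁ : T₀ ≤ T₁ := le_sup_left
  have hT₁edges : T₁.edgeSet = (T.edgeSet \ {s(a, b)}) ∪ {s(x, y)} := by
    rw [hT₁, edgeSet_sup, hT₀, edgeSet_deleteEdges, edgeSet_fromEdgeSet]
    congr 1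
    ext e
    simp only [Set.mem_diff, Set.mem_singleton_iff, Set.mem_setOf_eq,
      and_iff_left_iff_imp]
    rintro rfl
    exact fun h => hxny (Sym2.mk_isDiag_iff.mp h)
  have hT₁adjxy : T₁.Adj x y := by
    rw [hT₁, sup_adj]
    exact Or.inr (by rw [fromEdgeSet_adj]; exact ⟨rfl, hxny⟩)
  -- `T₁ ≤ G`
  have hT₁G : T₁ ≤ G := by
    rw [← edgeSet_subset_edgeSet, hT₁edges]
    rintro e (⟨heT, -⟩ | rfl)
    · exact edgeSet_mono hTG heT
    · exact hT'G hxy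
  -- `T₁` is connected
  have hra : ∀ v, T₁.Reachable v a := by
    have hba : T₁.Reachable b a := by
      rcases claim1 y with h1 | h1
      · exact absurd h1.symm hy
      · exact (h1.mono hT₀T₁).symm.trans
          (hT₁adjxy.symm.reachable.trans ((hx.mono hT₀T₁).symm))
    intro v
    rcases claim1 v with h1 | h1
    · exact h1.mono hT₀T₁
    · exact (h1.mono hT₀T₁).trans hba
  have hT₁c : T₁.Connected := by
    rw [connected_iff]
    exact ⟨fun u v => (hra u).trans (hra v).symm, ⟨a⟩⟩
  -- `T₁` is acyclic
  have hT₁a : T₁.IsAcyclic := by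
    intro u c hc
    by_cases hfc : s(x, y) ∈ c.edges
    · have hreach := (adj_and_reachable_delete_edges_iff_exists_cycle.mpr
        ⟨u, c, hc, hfc⟩).2
      have hle : (T₁ \ SimpleGraph.fromEdgeSet {s(x, y)}) ≤ T₀ := by
        intro u' v' h'
        rw [sdiff_adj, hT₁, sup_adj] at h'
        rcases h'.1 with h1 | h1
        · exact h1
        · exact absurd h1 h'.2
      have : T₀.Reachable x y := hreach.mono hle
      exact hy (hx.trans this)
    · have hsub : ∀ e ∈ c.edges, e ∈ T.edgeSet := by
        intro e hec
        have heT₁ := c.edges_subset_edgeSet hec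
        rw [hT₁edges] at heT₁
        rcases heT₁ with ⟨h1, -⟩ | rfl
        · exact h1
        · exact absurd hec hfc
      exact hTa (c.transfer T hsub) (hc.transfer hsub)
  -- apply minimality to `T₁`
  have hmin₁ := hmin T₁ ⟨hT₁G, hT₁c, hT₁a⟩
  have hfinT : T.edgeSet.Finite := Set.toFinite _
  have hfin₀ : (T.edgeSet \ {s(a, b)}).Finite := hfinT.diff
  have hdisj₁ : Disjoint (T.edgeSet \ {s(a, b)}) {s(x, y)} := by
    rw [Set.disjoint_singleton_right]
    rintro ⟨h1, -⟩
    exact hfT h1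
  have hdisj₂ : Disjoint (T.edgeSet \ {s(a, b)}) {s(a, b)} := by
    rw [Set.disjoint_singleton_right]
    rintro ⟨-, h2⟩
    exact h2 rfl
  have hTeq : T.edgeSet = (T.edgeSet \ {s(a, b)}) ∪ {s(a, b)} :=
    (Set.diff_union_of_subset (Set.singleton_subset_iff.mpr he)).symm
  have hsum₁ : (∑ᶠ e ∈ T₁.edgeSet, w e)
      = (∑ᶠ e ∈ T.edgeSet \ {s(a, b)}, w e) + w s(x, y) := by
    rw [hT₁edges, finsum_mem_union hdisj₁ hfin₀ (Set.finite_singleton _),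
      finsum_mem_singleton]
  have hsumT : (∑ᶠ e ∈ T.edgeSet, w e)
      = (∑ᶠ e ∈ T.edgeSet \ {s(a, b)}, w e) + w s(a, b) := by
    conv_lhs => rw [hTeq]
    rw [finsum_mem_union hdisj₂ hfin₀ (Set.finite_singleton _),
      finsum_mem_singleton]
  rw [hsumT, hsum₁] at hmin₁
  exact ⟨s(x, y), hfT', by linarith⟩

/-- every minimum (total-weight) spanning tree is a minimum bottleneck
spanning tree: its maximum edge weight is at most that of any other spanning tree. -/
theorem stmt_16 {V : Type*} [Fintype V] (hV : 2 ≤ Fintype.card V)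
    (G : SimpleGraph V) (hG : G.Connected) (w : Sym2 V → ℝ)
    (T : SimpleGraph V) (hT : IsSpanningTree G T)
    (hmin : ∀ T' : SimpleGraph V, IsSpanningTree G T' →
      (∑ᶠ e ∈ T.edgeSet, w e) ≤ ∑ᶠ e ∈ T'.edgeSet, w e) :
    ∀ T' : SimpleGraph V, IsSpanningTree G T' →
      sSup (w '' T.edgeSet) ≤ sSup (w '' T'.edgeSet) := by
  classical
  intro T' hT'
  have hTne : (w '' T.edgeSet).Nonempty :=
    (aux_edgeSet_nonempty hV T hT.2.1).image w
  have hTfin : (w '' T.edgeSet).Finite := (Set.toFinite _).image w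
  have hT'fin : (w '' T'.edgeSet).Finite := (Set.toFinite _).image w
  obtain ⟨e, heT, heq⟩ := hTne.csSup_mem hTfin
  rw [← heq]
  clear heq
  induction e using Sym2.ind with
  | _ a b =>
    obtain ⟨f, hfT', hle⟩ := aux_exchange G w T hT hmin T' hT' a b heT
    exact hle.trans (le_csSup hT'fin.bddAbove ⟨f, hfT', rfl⟩)
end
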